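/- arXiv:2411.06761 — 2 statements merged into one kernel-verified Lean document; each statement's English description precedes it below -/
import Mathlib

section
/- Let 0 < α < 1, p ∈ (1,∞), T > 0, and let F ∈ C¹([0,T]). Then for every t ∈ (0,T], the Caputo fractional derivatives satisfy ∂_t^α(|F|^p)(t) ≤ p|F(t)|^{p−2}F(t) · ∂_t^α F(t), where |F(t)|^{p−2}F(t) is interpreted as 0 when F(t)=0. -/
open MeasureTheory
open Filter Set

lemma caputoAux_convexOn {p : ℝ} (hp : 1 < p) : ConvexOn ℝ Set.univ (fun x : ℝ => |x| ^ p) := by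
  have himg : (fun x : ℝ => |x|) '' Set.univ = Set.Ici 0 := by
    ext x
    simp only [Set.image_univ, Set.mem_range, Set.mem_Ici]
    constructor
    · rintro ⟨y, rfl⟩; exact abs_nonneg y
    · intro hx; exact ⟨x, abs_of_nonneg hx⟩
  have habs : ConvexOn ℝ Set.univ (fun x : ℝ => |x|) := by
    have h := convexOn_norm (convex_univ (𝕜 := ℝ) (E := ℝ))
    exact h
  have hmono : MonotoneOn (fun x : ℝ => x ^ p) (Set.Ici 0) := fun x hx y _ hxy =>
    Real.rpow_le_rpow hx hxy (by linarith)
  have := ConvexOn.comp (g := fun x : ℝ => x ^ p) (himg ▸ convexOn_rpow hp.le) habs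
    (himg ▸ hmono)
  exact this

lemma caputoAux_tangent {p : ℝ} (hp : 1 < p) (a b : ℝ) :
    p * |b| ^ (p - 2) * b * (a - b) ≤ |a| ^ p - |b| ^ p := by
  have hconv : ConvexOn ℝ Set.univ (fun x : ℝ => |x| ^ p) := caputoAux_convexOn hp
  have hd : HasDerivAt (fun x : ℝ => |x| ^ p) (p * |b| ^ (p - 2) * b) b :=
    hasDerivAt_abs_rpow b hp
  rcases lt_trichotomy b a with h | rfl | h
  · have hs := hconv.le_slope_of_hasDerivAt (Set.mem_univ b) (Set.mem_univ a) h hd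
    rw [slope_def_field] at hs
    have h2 : 0 < a - b := by linarith
    calc p * |b| ^ (p - 2) * b * (a - b) ≤ ((|a| ^ p - |b| ^ p) / (a - b)) * (a - b) :=
          mul_le_mul_of_nonneg_right hs h2.le
      _ = |a| ^ p - |b| ^ p := div_mul_cancel₀ _ h2.ne'
  · simp
  · have hs := hconv.slope_le_of_hasDerivAt (Set.mem_univ a) (Set.mem_univ b) h hd
    rw [slope_def_field] at hs
    have h2 : a - b < 0 := by linarith
    calc p * |b| ^ (p - 2) * b * (a - b) ≤ ((|b| ^ p - |a| ^ p) / (b - a)) * (a - b) :=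
          mul_le_mul_of_nonpos_right hs h2.le
      _ = |a| ^ p - |b| ^ p := by
          rw [show a - b = -(b - a) by ring, mul_neg, div_mul_cancel₀ _ (by linarith : b - a ≠ 0)]
          ring

lemma caputoAux_contPhi' {p : ℝ} (hp : 1 < p) :
    Continuous (fun x : ℝ => p * |x| ^ (p - 2) * x) := by
  have h := (contDiff_norm_rpow (E := ℝ) hp).continuous_deriv le_rfl
  have he : deriv (fun x : ℝ => ‖x‖ ^ p) = fun x : ℝ => p * |x| ^ (p - 2) * x := by
    funext x
    rw [(hasDerivAt_norm_rpow x hp).deriv, Real.norm_eq_abs]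
  rwa [he] at h

/-- The Caputo fractional derivative `∂_t^α f(t) = ∫₀ᵗ (t−s)^{−α}/Γ(1−α) · f'(s) ds`. -/
noncomputable def caputo (α : ℝ) (f : ℝ → ℝ) (t : ℝ) : ℝ :=
  ∫ s in (0:ℝ)..t, ((t - s) ^ (-α) / Real.Gamma (1 - α)) * deriv f s

theorem caputo_chain_ineq (α p T : ℝ) (hα0 : 0 < α) (hα1 : α < 1) (hp : 1 < p) (hT : 0 < T)
    (F : ℝ → ℝ) (hdiff : ∀ s ∈ Set.Icc (0:ℝ) T, DifferentiableAt ℝ F s)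
    (hcont : ContinuousOn (deriv F) (Set.Icc 0 T)) :
    ∀ t ∈ Set.Ioc (0:ℝ) T,
      caputo α (fun s => |F s| ^ p) t ≤
        p * (if F t = 0 then 0 else |F t| ^ (p - 2) * F t) * caputo α F t := by
  intro t ht
  obtain ⟨ht0, htT⟩ := ht
  have hΓ : 0 < Real.Gamma (1 - α) := Real.Gamma_pos_of_pos (by linarith)
  set φ' : ℝ → ℝ := fun x => p * |x| ^ (p - 2) * x with hφ'def
  set c : ℝ := φ' (F t) with hcdef
  set k : ℝ → ℝ := fun r => r ^ (-α) / Real.Gamma (1 - α) with hkdef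
  set G : ℝ → ℝ := fun s => c * deriv F s - φ' (F s) * deriv F s with hGdef
  set g : ℝ → ℝ := fun s => c * F s - |F s| ^ p with hgdef
  have hsub : Set.Icc (0:ℝ) t ⊆ Set.Icc 0 T := Set.Icc_subset_Icc le_rfl htT
  have hIcc : Set.uIcc (0:ℝ) t = Set.Icc 0 t := Set.uIcc_of_le ht0.le
  have hFc : ContinuousOn F (Set.Icc 0 t) := fun s hs =>
    ((hdiff s (hsub hs)).continuousAt).continuousWithinAt
  have hF'c : ContinuousOn (deriv F) (Set.Icc 0 t) := hcont.mono hsub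
  have hφ'Fc : ContinuousOn (fun s => φ' (F s)) (Set.Icc 0 t) :=
    (caputoAux_contPhi' hp).comp_continuousOn hFc
  have hGc : ContinuousOn G (Set.Icc 0 t) :=
    (continuousOn_const.mul hF'c).sub (hφ'Fc.mul hF'c)
  -- kernel integrability
  have hker : IntervalIntegrable (fun s => k (t - s)) volume 0 t := by
    have h1 : IntervalIntegrable (fun x : ℝ => x ^ (-α)) volume 0 t :=
      intervalIntegral.intervalIntegrable_rpow' (by linarith)
    have h2 : IntervalIntegrable (fun x : ℝ => (t - x) ^ (-α)) volume 0 t := by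
      simpa using (h1.comp_sub_left t).symm
    exact h2.div_const _
  have hInt : ∀ h : ℝ → ℝ, ContinuousOn h (Set.Icc 0 t) →
      IntervalIntegrable (fun s => k (t - s) * h s) volume 0 t := fun h hh =>
    hker.mul_continuousOn (hIcc ▸ hh)
  -- derivatives
  have hFd : ∀ s ∈ Set.Icc (0:ℝ) t, HasDerivAt F (deriv F s) s := fun s hs =>
    (hdiff s (hsub hs)).hasDerivAt
  have hPd : ∀ s ∈ Set.Icc (0:ℝ) t, HasDerivAt (fun u => |F u| ^ p) (φ' (F s) * deriv F s) s :=
    fun s hs => (hasDerivAt_abs_rpow (F s) hp).comp s (hFd s hs)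
  have hderivP : ∀ s ∈ Set.Icc (0:ℝ) t, deriv (fun u => |F u| ^ p) s = φ' (F s) * deriv F s :=
    fun s hs => (hPd s hs).deriv
  have hgd : ∀ s ∈ Set.Icc (0:ℝ) t, HasDerivAt g (G s) s := fun s hs =>
    ((hFd s hs).const_mul c).sub (hPd s hs)
  have hgc : ContinuousOn g (Set.Icc 0 t) := fun s hs =>
    ((hgd s hs).continuousAt).continuousWithinAt
  have hgle : ∀ s, g s ≤ g t := by
    intro s
    have htan := caputoAux_tangent hp (F s) (F t)
    simp only [hgdef, hcdef, hφ'def]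
    nlinarith [htan]
  have hgt0 : HasDerivAt g 0 t := by
    have h := hgd t (Set.right_mem_Icc.2 ht0.le)
    have hGt : G t = 0 := by rw [hGdef]; simp [hcdef]
    rwa [hGt] at h
  have hkt : 0 ≤ k t := div_nonneg (Real.rpow_nonneg ht0.le _) hΓ.le
  -- the ε-truncated inequality
  have hεineq : ∀ ε ∈ Set.Ioo (0:ℝ) t,
      k ε * (g (t - ε) - g t) ≤ ∫ s in (0:ℝ)..(t - ε), k (t - s) * G s := by
    intro ε hε
    obtain ⟨hε0, hεt⟩ := hε
    have hb0 : (0:ℝ) ≤ t - ε := by linarith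
    have hIccb : Set.uIcc (0:ℝ) (t - ε) = Set.Icc 0 (t - ε) := Set.uIcc_of_le hb0
    have hsubb : Set.Icc (0:ℝ) (t - ε) ⊆ Set.Icc 0 t := Set.Icc_subset_Icc le_rfl (by linarith)
    set m : ℝ → ℝ := fun x => α * (t - x) ^ (-α - 1) / Real.Gamma (1 - α) with hmdef
    have hu : ∀ x ∈ Set.uIcc (0:ℝ) (t - ε), HasDerivAt (fun s => k (t - s)) (m x) x := by
      intro x hx
      rw [hIccb] at hx
      have hxt : 0 < t - x := by have := hx.2; linarith
      have h1 : HasDerivAt (fun s : ℝ => t - s) (-1) x := (hasDerivAt_id x).const_sub t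
      have h2 : HasDerivAt (fun y : ℝ => y ^ (-α)) ((-α) * (t - x) ^ (-α - 1)) (t - x) :=
        Real.hasDerivAt_rpow_const (Or.inl hxt.ne')
      have h3 := (h2.comp x h1).div_const (Real.Gamma (1 - α))
      refine h3.congr_deriv ?_
      rw [hmdef]
      ring
    have hm_cont : ContinuousOn m (Set.Icc 0 (t - ε)) := by
      apply ContinuousOn.div_const
      apply continuousOn_const.mul
      exact (continuousOn_const.sub continuousOn_id).rpow_const
        (fun x hx => Or.inl (by have := hx.2; intro h0; simp at h0; linarith))
    have hu' : IntervalIntegrable m volume 0 (t - ε) :=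
      (by rw [hIccb]; exact hm_cont : ContinuousOn m (Set.uIcc 0 (t - ε))).intervalIntegrable
    have hv : ∀ x ∈ Set.uIcc (0:ℝ) (t - ε), HasDerivAt g (G x) x := fun x hx =>
      hgd x (hsubb (hIccb ▸ hx))
    have hv' : IntervalIntegrable G volume 0 (t - ε) :=
      (by rw [hIccb]; exact hGc.mono hsubb : ContinuousOn G (Set.uIcc 0 (t - ε))).intervalIntegrable
    have hparts := intervalIntegral.integral_mul_deriv_eq_deriv_mul hu hv hu' hv'
    have hm_int : ∫ x in (0:ℝ)..(t - ε), m x = k (t - (t - ε)) - k (t - 0) :=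
      intervalIntegral.integral_eq_sub_of_hasDerivAt hu hu'
    have hmg_int : IntervalIntegrable (fun x => m x * g x) volume 0 (t - ε) :=
      hu'.mul_continuousOn (by rw [hIccb]; exact hgc.mono hsubb)
    have hmono : ∫ x in (0:ℝ)..(t - ε), m x * g x ≤ ∫ x in (0:ℝ)..(t - ε), m x * g t := by
      apply intervalIntegral.integral_mono_on hb0 hmg_int (hu'.mul_const _)
      intro x hx
      have hm0 : 0 ≤ m x := by
        rw [hmdef]
        have hxt : 0 ≤ t - x := by have := hx.2; linarith
        positivity
      exact mul_le_mul_of_nonneg_left (hgle x) hm0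
    have hmgt : ∫ x in (0:ℝ)..(t - ε), m x * g t = (k (t - (t - ε)) - k (t - 0)) * g t := by
      rw [intervalIntegral.integral_mul_const, hm_int]
    have hke : k (t - (t - ε)) = k ε := by norm_num
    have hkt0 : k (t - 0) = k t := by norm_num
    rw [hke, hkt0] at hm_int hmgt
    rw [hparts, hke, hkt0]
    have hg0 : g 0 ≤ g t := hgle 0
    have h1 : ∫ x in (0:ℝ)..(t - ε), m x * g x ≤ (k ε - k t) * g t := by
      rw [← hmgt]; exact hmono
    nlinarith [mul_nonneg hkt (sub_nonneg.2 hg0)]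
  -- limit of the truncated integrals
  have hIntFull : IntervalIntegrable (fun s => k (t - s) * G s) volume 0 t := hInt G hGc
  have hL1 : Tendsto (fun ε => ∫ s in (0:ℝ)..(t - ε), k (t - s) * G s)
      (nhdsWithin 0 (Set.Ioi 0)) (nhds (∫ s in (0:ℝ)..t, k (t - s) * G s)) := by
    have hprim : ContinuousOn (fun x => ∫ s in (0:ℝ)..x, k (t - s) * G s) (Set.uIcc 0 t) :=
      intervalIntegral.continuousOn_primitive_interval' hIntFull Set.left_mem_uIcc
    have hct := (hprim t Set.right_mem_uIcc).tendsto
    have h2 : Tendsto (fun ε : ℝ => t - ε) (nhdsWithin 0 (Set.Ioi 0))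
        (nhdsWithin t (Set.uIcc 0 t)) := by
      apply tendsto_nhdsWithin_of_tendsto_nhds_of_eventually_within
      · have : Tendsto (fun ε : ℝ => t - ε) (nhds 0) (nhds t) := by
          simpa using (continuous_sub_left t).tendsto (0:ℝ)
        exact this.mono_left nhdsWithin_le_nhds
      · filter_upwards [Ioo_mem_nhdsGT_of_mem (Set.left_mem_Ico.2 ht0)] with ε hε
        rw [hIcc]
        exact ⟨by linarith [hε.2], by linarith [hε.1]⟩
    exact hct.comp h2
  have hL2 : Tendsto (fun ε => k ε * (g (t - ε) - g t)) (nhdsWithin 0 (Set.Ioi 0)) (nhds 0) := by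
    have h1 : (fun y => g y - g t - (y - t) • (0:ℝ)) =o[nhds t] (fun y => y - t) :=
      hasDerivAt_iff_isLittleO.mp hgt0
    have h1' : (fun y => g y - g t) =o[nhds t] (fun y => y - t) := by simpa using h1
    have h2 : Tendsto (fun ε : ℝ => t - ε) (nhds 0) (nhds t) := by
      simpa using (continuous_sub_left t).tendsto (0:ℝ)
    have h3 := h1'.comp_tendsto h2
    have h4 : (fun ε : ℝ => g (t - ε) - g t) =o[nhds 0] (fun ε : ℝ => ε) := by
      have e : ((fun y : ℝ => y - t) ∘ fun ε : ℝ => t - ε) = fun ε : ℝ => -ε := by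
        funext ε; simp [Function.comp]
      rw [e] at h3
      have h5 := h3.neg_right
      simp only [neg_neg] at h5
      exact h5
    have hbig : (fun ε : ℝ => k ε) =O[nhdsWithin 0 (Set.Ioi 0)] (fun ε : ℝ => ε ^ (-α)) := by
      apply Asymptotics.isBigO_iff.mpr
      refine ⟨1 / Real.Gamma (1 - α), Filter.Eventually.of_forall fun ε => ?_⟩
      rw [hkdef]
      simp only [norm_div, Real.norm_eq_abs, abs_of_pos hΓ]
      rw [div_eq_mul_inv, one_div, mul_comm]
    have h5 := hbig.mul_isLittleO (h4.mono nhdsWithin_le_nhds)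
    have h6 : Tendsto (fun ε : ℝ => ε ^ (-α) * ε) (nhdsWithin 0 (Set.Ioi 0)) (nhds 0) := by
      have hev : ∀ᶠ ε : ℝ in nhdsWithin (0:ℝ) (Set.Ioi 0), ε ^ (1 - α) = ε ^ (-α) * ε := by
        filter_upwards [self_mem_nhdsWithin] with ε (hε : ε ∈ Set.Ioi 0)
        rw [show (1:ℝ) - α = -α + 1 by ring, Real.rpow_add hε, Real.rpow_one]
      apply Tendsto.congr' hev
      have hc : ContinuousAt (fun x : ℝ => x ^ (1 - α)) 0 :=
        Real.continuousAt_rpow_const 0 _ (Or.inr (by linarith))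
      have := hc.tendsto.mono_left (nhdsWithin_le_nhds (s := Set.Ioi (0:ℝ)))
      simpa [Real.zero_rpow (show (1:ℝ) - α ≠ 0 by linarith)] using this
    exact h5.isBigO.trans_tendsto h6
  have hkey : 0 ≤ ∫ s in (0:ℝ)..t, k (t - s) * G s := by
    refine le_of_tendsto_of_tendsto hL2 hL1 ?_
    filter_upwards [Ioo_mem_nhdsGT_of_mem (Set.left_mem_Ico.2 ht0)] with ε hε
    exact hεineq ε hε
  -- reassemble
  have hif : p * (if F t = 0 then 0 else |F t| ^ (p - 2) * F t) = c := by
    rw [hcdef, hφ'def]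
    by_cases h : F t = 0
    · simp [h]
    · simp only [if_neg h]; ring
  rw [hif]
  have hi1 : IntervalIntegrable (fun s => k (t - s) * deriv F s) volume 0 t := hInt _ hF'c
  have hi2 : IntervalIntegrable (fun s => k (t - s) * deriv (fun u => |F u| ^ p) s) volume 0 t := by
    apply hInt
    exact ContinuousOn.congr (hφ'Fc.mul hF'c) (fun s hs => hderivP s hs)
  have hsplit : c * caputo α F t - caputo α (fun s => |F s| ^ p) t
      = ∫ s in (0:ℝ)..t, k (t - s) * G s := by
    rw [show caputo α F t = ∫ s in (0:ℝ)..t, k (t - s) * deriv F s from rfl,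
      show caputo α (fun s => |F s| ^ p) t
        = ∫ s in (0:ℝ)..t, k (t - s) * deriv (fun u => |F u| ^ p) s from rfl,
      ← intervalIntegral.integral_const_mul, ← intervalIntegral.integral_sub (hi1.const_mul c) hi2]
    apply intervalIntegral.integral_congr
    intro s hs
    rw [hIcc] at hs
    rw [hGdef]
    simp only
    rw [hderivP s hs]
    ring
  linarith [hkey, hsplit]
end

section
/- Let 0 < α < 1, p ∈ (1,∞), T > 0, and let F ∈ C¹([0,T]) with F(0) = 0. Then for every t ∈ (0,T], one has 0 ≤ I_t^{1−α}(|F|^p)(t) ≤ p ∫₀ᵗ |F(s)|^{p−2}F(s) · ∂_t^α F(s) ds; in particular ∫₀ᵗ |F(s)|^{p−2}F(s) · ∂_t^α F(s) ds ≥ 0. -/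
open MeasureTheory

/-- The Riemann–Liouville fractional integral `I_t^β f`. -/
noncomputable def RL (β : ℝ) (f : ℝ → ℝ) (t : ℝ) : ℝ :=
  ∫ s in (0:ℝ)..t, ((t - s) ^ (β - 1) / Real.Gamma β) * f s

namespace CapAux

open Set intervalIntegral Filter Topology

/-! ### Elementary facts about `η(x) = |x|^p` -/

lemma eta_deriv {p : ℝ} (hp : 1 < p) (x : ℝ) :
    HasDerivAt (fun y : ℝ => |y| ^ p) (p * (|x| ^ (p - 2) * x)) x := by
  simpa [mul_assoc] using hasDerivAt_abs_rpow x hp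

lemma eta1_cont {p : ℝ} (hp : 1 < p) : Continuous (fun x : ℝ => |x| ^ (p - 2) * x) := by
  have h : Continuous (deriv (fun y : ℝ => |y| ^ p)) := by
    have := (contDiff_norm_rpow (E := ℝ) hp).continuous_deriv le_rfl
    simpa [Real.norm_eq_abs] using this
  have h2 : (fun x : ℝ => |x| ^ (p - 2) * x)
      = fun x => p⁻¹ * deriv (fun y : ℝ => |y| ^ p) x := by
    funext x
    rw [(eta_deriv hp x).deriv]
    field_simp
  rw [h2]
  exact continuous_const.mul h

lemma eta_convex {p : ℝ} (hp : 1 < p) : ConvexOn ℝ Set.univ fun y : ℝ => |y| ^ p := by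
  refine ⟨convex_univ, fun a _ b _ w v hw hv hwv => ?_⟩
  have h1 : |w • a + v • b| ^ p ≤ (w * |a| + v * |b|) ^ p := by
    apply Real.rpow_le_rpow (abs_nonneg _) ?_ (by positivity)
    calc |w • a + v • b| ≤ |w • a| + |v • b| := abs_add_le _ _
      _ = w * |a| + v * |b| := by
        simp [abs_mul, abs_of_nonneg hw, abs_of_nonneg hv, smul_eq_mul]
  have h2 := (convexOn_rpow hp.le).2 (mem_Ici.mpr (abs_nonneg a))
    (mem_Ici.mpr (abs_nonneg b)) hw hv hwv
  simp only [smul_eq_mul] at h2 ⊢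
  exact h1.trans h2

lemma eta_tangent {p : ℝ} (hp : 1 < p) (a b : ℝ) :
    p * (|b| ^ (p - 2) * b) * (a - b) ≤ |a| ^ p - |b| ^ p := by
  rcases lt_trichotomy b a with h | h | h
  · have hs := (eta_convex hp).le_slope_of_hasDerivAt (mem_univ b) (mem_univ a) h
      (eta_deriv hp b)
    rw [slope_def_field] at hs
    have hba : 0 < a - b := by linarith
    have := (le_div_iff₀ hba).mp hs
    linarith
  · simp [h]
  · have hs := (eta_convex hp).slope_le_of_hasDerivAt (mem_univ a) (mem_univ b) h
      (eta_deriv hp b)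
    rw [slope_def_field] at hs
    have hba : 0 < b - a := by linarith
    have := (div_le_iff₀ hba).mp hs
    nlinarith

/-! ### Kernel integrability and integrals -/

lemma ker_intervalIntegrable {α : ℝ} (hα0 : 0 < α) (hα1 : α < 1) (a b : ℝ) :
    IntervalIntegrable (fun τ => (b - τ) ^ (-α)) volume a b := by
  have h := (intervalIntegrable_rpow' (a := b - a) (b := b - b)
    (by linarith : (-1:ℝ) < -α)).comp_sub_left b
  simpa using h

lemma ker_mul_intervalIntegrable {α : ℝ} (hα0 : 0 < α) (hα1 : α < 1) {a b : ℝ} (hab : a ≤ b)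
    {h : ℝ → ℝ} (hh : ContinuousOn h (Icc a b)) :
    IntervalIntegrable (fun τ => (b - τ) ^ (-α) * h τ) volume a b :=
  (ker_intervalIntegrable hα0 hα1 a b).mul_continuousOn (by rwa [uIcc_of_le hab])

lemma ker_integral {α : ℝ} (hα1 : α < 1) {a b : ℝ} :
    ∫ τ in a..b, (b - τ) ^ (-α) = (b - a) ^ (1 - α) / (1 - α) := by
  rw [show (fun τ => (b - τ) ^ (-α)) = fun τ => ((fun u : ℝ => u ^ (-α)) (b - τ)) from rfl]
  rw [intervalIntegral.integral_comp_sub_left (fun u : ℝ => u ^ (-α)) b]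
  rw [sub_self, integral_rpow (Or.inl (by linarith))]
  rw [Real.zero_rpow (by intro hc; linarith : -α + 1 ≠ 0)]
  rw [show -α + 1 = 1 - α by ring]
  ring

lemma ker_integral' {α : ℝ} (hα1 : α < 1) {a b : ℝ} :
    ∫ s in a..b, (s - a) ^ (-α) = (b - a) ^ (1 - α) / (1 - α) := by
  rw [show (fun s => (s - a) ^ (-α)) = fun s => ((fun u : ℝ => u ^ (-α)) (s - a)) from rfl]
  rw [intervalIntegral.integral_comp_sub_right (fun u : ℝ => u ^ (-α)) a]
  rw [sub_self, integral_rpow (Or.inl (by linarith))]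
  rw [Real.zero_rpow (by intro hc; linarith : -α + 1 ≠ 0)]
  rw [show -α + 1 = 1 - α by ring]
  ring

lemma measurable_ker {α : ℝ} : Measurable (fun x : ℝ => x ^ (-α)) :=
  measurable_of_continuousOn_compl_singleton 0
    (fun x hx => (Real.continuousAt_rpow_const x (-α) (Or.inl hx)).continuousWithinAt)

/-! ### The key positivity lemma -/

lemma key_nonneg {α : ℝ} (hα0 : 0 < α) (hα1 : α < 1) {s : ℝ} (hs : 0 < s) {ψ ψ' : ℝ → ℝ}
    (hψd : ∀ τ ∈ Icc (0:ℝ) s, HasDerivAt ψ (ψ' τ) τ)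
    (hψ'c : ContinuousOn ψ' (Icc 0 s))
    (hψle : ∀ τ ∈ Icc (0:ℝ) s, ψ τ ≤ 0) (hψs : ψ s = 0) :
    0 ≤ ∫ τ in (0:ℝ)..s, (s - τ) ^ (-α) * ψ' τ := by
  have h1α : (0:ℝ) < 1 - α := by linarith
  obtain ⟨M0, hM0⟩ := (isCompact_Icc (a := (0:ℝ)) (b := s)).exists_bound_of_continuousOn hψ'c
  set M : ℝ := max M0 0 with hMdef
  have hMnn : 0 ≤ M := le_max_right _ _
  have hM : ∀ τ ∈ Icc (0:ℝ) s, |ψ' τ| ≤ M := fun τ hτ =>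
    le_trans (by simpa using hM0 τ hτ) (le_max_left _ _)
  have hψlip : ∀ τ ∈ Icc (0:ℝ) s, |ψ τ| ≤ M * (s - τ) := by
    intro τ hτ
    have := Convex.norm_image_sub_le_of_norm_hasDerivWithin_le
      (f := ψ) (f' := ψ') (s := Icc (0:ℝ) s)
      (fun x hx => (hψd x hx).hasDerivWithinAt)
      (fun x hx => by simpa using hM x hx) (convex_Icc 0 s)
      (right_mem_Icc.mpr hs.le) hτ
    rw [hψs] at this
    simpa [abs_of_nonpos (by linarith [hτ.2] : τ - s ≤ 0)] using this
  have hψc : ContinuousOn ψ (Icc (0:ℝ) s) := fun τ hτ =>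
    (hψd τ hτ).continuousAt.continuousWithinAt
  have hInt : IntervalIntegrable (fun τ => (s - τ) ^ (-α) * ψ' τ) volume 0 s :=
    ker_mul_intervalIntegrable hα0 hα1 hs.le hψ'c
  set I : ℝ := ∫ τ in (0:ℝ)..s, (s - τ) ^ (-α) * ψ' τ with hIdef
  have key : ∀ ε ∈ Ioo (0:ℝ) s, -(M * ε ^ (1 - α) + M * ε ^ (1 - α) / (1 - α)) ≤ I := by
    intro ε hε
    obtain ⟨hε0, hεs⟩ := hε
    have hsub1 : Icc (0:ℝ) (s - ε) ⊆ Icc 0 s := Icc_subset_Icc le_rfl (by linarith)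
    have hsub2 : Icc (s - ε) s ⊆ Icc 0 s := Icc_subset_Icc (by linarith) le_rfl
    have hI1 : IntervalIntegrable (fun τ => (s - τ) ^ (-α) * ψ' τ) volume 0 (s - ε) :=
      hInt.mono_set (by rw [uIcc_of_le (by linarith), uIcc_of_le hs.le]; exact hsub1)
    have hI2 : IntervalIntegrable (fun τ => (s - τ) ^ (-α) * ψ' τ) volume (s - ε) s :=
      hInt.mono_set (by rw [uIcc_of_le (by linarith), uIcc_of_le hs.le]; exact hsub2)
    have hsplit : (∫ τ in (0:ℝ)..(s - ε), (s - τ) ^ (-α) * ψ' τ)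
        + (∫ τ in (s - ε)..s, (s - τ) ^ (-α) * ψ' τ) = I :=
      integral_add_adjacent_intervals hI1 hI2
    have tail : -(M * ε ^ (1 - α) / (1 - α)) ≤ ∫ τ in (s - ε)..s, (s - τ) ^ (-α) * ψ' τ := by
      have hmono : ∫ τ in (s - ε)..s, (-M) * (s - τ) ^ (-α)
          ≤ ∫ τ in (s - ε)..s, (s - τ) ^ (-α) * ψ' τ := by
        apply integral_mono_on (by linarith)
          ((ker_intervalIntegrable hα0 hα1 (s - ε) s).const_mul (-M)) hI2
        intro τ hτ
        have hk : (0:ℝ) ≤ (s - τ) ^ (-α) := Real.rpow_nonneg (by linarith [hτ.2]) _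
        have := (abs_le.mp (hM τ (hsub2 hτ))).1
        calc (-M) * (s - τ) ^ (-α) = (s - τ) ^ (-α) * (-M) := by ring
          _ ≤ (s - τ) ^ (-α) * ψ' τ := mul_le_mul_of_nonneg_left this hk
      have hcalc : ∫ τ in (s - ε)..s, (-M) * (s - τ) ^ (-α)
          = -(M * ε ^ (1 - α) / (1 - α)) := by
        rw [intervalIntegral.integral_const_mul, ker_integral hα1]
        rw [show s - (s - ε) = ε by ring]
        ring
      linarith [hmono, hcalc.symm.le]
    have head : -(M * ε ^ (1 - α)) ≤ ∫ τ in (0:ℝ)..(s - ε), (s - τ) ^ (-α) * ψ' τ := by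
      set Φ : ℝ → ℝ := fun τ => (s - τ) ^ (-α) * ψ τ with hΦdef
      set Φ' : ℝ → ℝ := fun τ => α * (s - τ) ^ (-α - 1) * ψ τ + (s - τ) ^ (-α) * ψ' τ
        with hΦ'def
      have hne : ∀ τ ∈ Icc (0:ℝ) (s - ε), s - τ ≠ 0 := fun τ hτ => by
        have := hτ.2; intro hc; linarith [hτ.2]
      have hd : ∀ τ ∈ uIcc (0:ℝ) (s - ε), HasDerivAt Φ (Φ' τ) τ := by
        intro τ hτ
        rw [uIcc_of_le (by linarith)] at hτ
        have hk : HasDerivAt (fun τ : ℝ => (s - τ) ^ (-α)) (α * (s - τ) ^ (-α - 1)) τ := by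
          have hbase := Real.hasDerivAt_rpow_const (x := s - τ) (p := -α)
            (Or.inl (hne τ hτ))
          have hlin : HasDerivAt (fun τ : ℝ => s - τ) (-1) τ :=
            (hasDerivAt_id τ).const_sub s
          have := hbase.comp τ hlin
          exact this.congr_deriv (by ring)
        exact hk.mul (hψd τ (hsub1 hτ))
      have hcont1 : ContinuousOn (fun τ : ℝ => α * (s - τ) ^ (-α - 1) * ψ τ)
          (Icc 0 (s - ε)) := by
        apply ContinuousOn.mul ?_ (hψc.mono hsub1)
        apply ContinuousOn.mul continuousOn_const
        intro τ hτ
        exact ((Real.continuousAt_rpow_const (s - τ) (-α - 1)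
          (Or.inl (hne τ hτ))).comp
          ((continuous_const.sub continuous_id).continuousAt)).continuousWithinAt
      have hcont2 : ContinuousOn Φ' (Icc 0 (s - ε)) := by
        apply hcont1.add
        apply ContinuousOn.mul ?_ (hψ'c.mono hsub1)
        intro τ hτ
        exact ((Real.continuousAt_rpow_const (s - τ) (-α)
          (Or.inl (hne τ hτ))).comp
          ((continuous_const.sub continuous_id).continuousAt)).continuousWithinAt
      have hIntΦ' : IntervalIntegrable Φ' volume 0 (s - ε) :=
        hcont2.intervalIntegrable_of_Icc (by linarith)
      have hftc : ∫ τ in (0:ℝ)..(s - ε), Φ' τ = Φ (s - ε) - Φ 0 :=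
        integral_eq_sub_of_hasDerivAt hd hIntΦ'
      have hInt1' : IntervalIntegrable (fun τ : ℝ => α * (s - τ) ^ (-α - 1) * ψ τ)
          volume 0 (s - ε) := hcont1.intervalIntegrable_of_Icc (by linarith)
      have hsplit2 : ∫ τ in (0:ℝ)..(s - ε), (s - τ) ^ (-α) * ψ' τ
          = (Φ (s - ε) - Φ 0) - ∫ τ in (0:ℝ)..(s - ε), α * (s - τ) ^ (-α - 1) * ψ τ := by
        rw [← hftc, ← intervalIntegral.integral_sub hIntΦ' hInt1']
        congr 1
        funext τ
        simp only [hΦ'def]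
        ring
      have hΦ0 : Φ 0 ≤ 0 := by
        have h0 : ψ 0 ≤ 0 := hψle 0 (left_mem_Icc.mpr hs.le)
        have : (0:ℝ) ≤ (s - 0) ^ (-α) := Real.rpow_nonneg (by linarith) _
        exact mul_nonpos_of_nonneg_of_nonpos this h0
      have hIneg : ∫ τ in (0:ℝ)..(s - ε), α * (s - τ) ^ (-α - 1) * ψ τ ≤ 0 := by
        have := intervalIntegral.integral_nonneg (μ := volume) (f := fun τ : ℝ =>
          -(α * (s - τ) ^ (-α - 1) * ψ τ)) (by linarith : (0:ℝ) ≤ s - ε) ?_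
        · have heq : ∫ τ in (0:ℝ)..(s - ε), -(α * (s - τ) ^ (-α - 1) * ψ τ)
              = -∫ τ in (0:ℝ)..(s - ε), α * (s - τ) ^ (-α - 1) * ψ τ :=
            intervalIntegral.integral_neg
          linarith [heq ▸ this]
        · intro τ hτ
          have hk : (0:ℝ) ≤ (s - τ) ^ (-α - 1) := Real.rpow_nonneg (by linarith [hτ.2]) _
          have hψτ : ψ τ ≤ 0 := hψle τ (hsub1 hτ)
          have : α * (s - τ) ^ (-α - 1) * ψ τ ≤ 0 :=
            mul_nonpos_of_nonneg_of_nonpos (by positivity) hψτ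
          show 0 ≤ -(α * (s - τ) ^ (-α - 1) * ψ τ)
          linarith
      have hΦsε : -(M * ε ^ (1 - α)) ≤ Φ (s - ε) := by
        have hmem : s - ε ∈ Icc (0:ℝ) s := ⟨by linarith, by linarith⟩
        have hlb : -(M * ε) ≤ ψ (s - ε) := by
          have := (abs_le.mp (hψlip _ hmem)).1
          calc -(M * ε) = -(M * (s - (s - ε))) := by ring_nf
            _ ≤ ψ (s - ε) := this
        have hknn : (0:ℝ) ≤ ε ^ (-α) := Real.rpow_nonneg hε0.le _
        have h2 : ε ^ (-α) * (-(M * ε)) ≤ ε ^ (-α) * ψ (s - ε) :=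
          mul_le_mul_of_nonneg_left hlb hknn
        have h3 : ε ^ (-α) * (-(M * ε)) = -(M * ε ^ (1 - α)) := by
          rw [show (1:ℝ) - α = -α + 1 by ring, Real.rpow_add hε0, Real.rpow_one]
          ring
        have h4 : Φ (s - ε) = ε ^ (-α) * ψ (s - ε) := by
          simp only [hΦdef, show s - (s - ε) = ε by ring]
        rw [h4]; linarith
      rw [hsplit2]
      linarith
    linarith [hsplit, head, tail]
  set C : ℝ := M + M / (1 - α) with hCdef
  have key' : ∀ᶠ ε in 𝓝[>] (0:ℝ), -(C * ε ^ (1 - α)) ≤ I := by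
    filter_upwards [Ioo_mem_nhdsGT hs] with ε hε
    have := key ε hε
    have hrw : M * ε ^ (1 - α) + M * ε ^ (1 - α) / (1 - α) = C * ε ^ (1 - α) := by
      rw [hCdef]
      ring
    linarith [hrw ▸ this]
  have htend : Tendsto (fun ε : ℝ => -(C * ε ^ (1 - α))) (𝓝[>] (0:ℝ)) (𝓝 0) := by
    have h1 : Tendsto (fun ε : ℝ => ε ^ (1 - α)) (𝓝 (0:ℝ)) (𝓝 ((0:ℝ) ^ (1 - α))) :=
      (Real.continuousAt_rpow_const 0 (1 - α) (Or.inr h1α.le)).tendsto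
    rw [Real.zero_rpow h1α.ne'] at h1
    have h2 : Tendsto (fun ε : ℝ => -(C * ε ^ (1 - α))) (𝓝 (0:ℝ)) (𝓝 (-(C * 0))) :=
      (h1.const_mul C).neg
    rw [show -(C * (0:ℝ)) = 0 by ring] at h2
    exact h2.mono_left nhdsWithin_le_nhds
  exact le_of_tendsto htend key'

/-! ### Pointwise Caputo convexity inequality -/

lemma caputo_ptwise {α p T : ℝ} (hα0 : 0 < α) (hα1 : α < 1) (hp : 1 < p)
    {F : ℝ → ℝ} (hdiff : ∀ u ∈ Icc (0:ℝ) T, DifferentiableAt ℝ F u)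
    (hcont : ContinuousOn (deriv F) (Icc 0 T)) {s : ℝ} (hs : s ∈ Ioc (0:ℝ) T) :
    caputo α (fun y => |F y| ^ p) s ≤ p * (|F s| ^ (p - 2) * F s) * caputo α F s := by
  have hc : 0 < Real.Gamma (1 - α) := Real.Gamma_pos_of_pos (by linarith)
  have hs0 : 0 < s := hs.1
  have hIccs : Icc (0:ℝ) s ⊆ Icc 0 T := Icc_subset_Icc le_rfl hs.2
  have hFc : ContinuousOn F (Icc 0 T) := fun u hu =>
    (hdiff u hu).continuousAt.continuousWithinAt
  have hGd : ∀ u ∈ Icc (0:ℝ) T,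
      HasDerivAt (fun y => |F y| ^ p) (p * (|F u| ^ (p - 2) * F u) * deriv F u) u := by
    intro u hu
    have := (eta_deriv hp (F u)).comp u (hdiff u hu).hasDerivAt
    simpa [Function.comp_def, mul_assoc] using this
  set ψ : ℝ → ℝ := fun τ =>
    p * (|F s| ^ (p - 2) * F s) * (F τ - F s) - (|F τ| ^ p - |F s| ^ p) with hψdef
  set ψ' : ℝ → ℝ := fun τ =>
    p * (|F s| ^ (p - 2) * F s) * deriv F τ - p * (|F τ| ^ (p - 2) * F τ) * deriv F τ
    with hψ'def
  have hψd : ∀ τ ∈ Icc (0:ℝ) s, HasDerivAt ψ (ψ' τ) τ := by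
    intro τ hτ
    have h1 : HasDerivAt (fun τ => p * (|F s| ^ (p - 2) * F s) * (F τ - F s))
        (p * (|F s| ^ (p - 2) * F s) * deriv F τ) τ :=
      (((hdiff τ (hIccs hτ)).hasDerivAt.sub_const (F s)).const_mul _)
    have h2 : HasDerivAt (fun τ => |F τ| ^ p - |F s| ^ p)
        (p * (|F τ| ^ (p - 2) * F τ) * deriv F τ) τ :=
      ((hGd τ (hIccs hτ)).sub_const _)
    exact h1.sub h2
  have hψ'c : ContinuousOn ψ' (Icc 0 s) := by
    have hdc : ContinuousOn (deriv F) (Icc 0 s) := hcont.mono hIccs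
    have he : ContinuousOn (fun τ => |F τ| ^ (p - 2) * F τ) (Icc 0 s) :=
      (eta1_cont hp).comp_continuousOn (hFc.mono hIccs)
    exact (continuousOn_const.mul hdc).sub ((continuousOn_const.mul he).mul hdc)
  have hψle : ∀ τ ∈ Icc (0:ℝ) s, ψ τ ≤ 0 := by
    intro τ hτ
    have := eta_tangent hp (F τ) (F s)
    simp only [hψdef]
    linarith
  have hψs : ψ s = 0 := by simp [hψdef]
  have hkey := key_nonneg hα0 hα1 hs0 hψd hψ'c hψle hψs
  have hint1 : IntervalIntegrable (fun τ => (s - τ) ^ (-α) * deriv F τ) volume 0 s :=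
    ker_mul_intervalIntegrable hα0 hα1 hs0.le (hcont.mono hIccs)
  have hint2 : IntervalIntegrable
      (fun τ => (s - τ) ^ (-α) * (p * (|F τ| ^ (p - 2) * F τ) * deriv F τ)) volume 0 s := by
    apply ker_mul_intervalIntegrable hα0 hα1 hs0.le
    exact (continuousOn_const.mul
      ((eta1_cont hp).comp_continuousOn (hFc.mono hIccs))).mul (hcont.mono hIccs)
  have hsub : ∫ τ in (0:ℝ)..s, (s - τ) ^ (-α) * ψ' τ
      = (p * (|F s| ^ (p - 2) * F s)) * (∫ τ in (0:ℝ)..s, (s - τ) ^ (-α) * deriv F τ)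
        - ∫ τ in (0:ℝ)..s, (s - τ) ^ (-α) * (p * (|F τ| ^ (p - 2) * F τ) * deriv F τ) := by
    rw [← intervalIntegral.integral_const_mul,
      ← intervalIntegral.integral_sub (hint1.const_mul _) hint2]
    apply intervalIntegral.integral_congr
    intro τ _
    simp only [hψ'def]
    ring
  have hcF : caputo α F s
      = (1 / Real.Gamma (1 - α)) * ∫ τ in (0:ℝ)..s, (s - τ) ^ (-α) * deriv F τ := by
    rw [caputo, ← intervalIntegral.integral_const_mul]
    apply intervalIntegral.integral_congr
    intro τ _
    ring
  have hcG : caputo α (fun y => |F y| ^ p) s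
      = (1 / Real.Gamma (1 - α)) * ∫ τ in (0:ℝ)..s,
          (s - τ) ^ (-α) * (p * (|F τ| ^ (p - 2) * F τ) * deriv F τ) := by
    rw [caputo, ← intervalIntegral.integral_const_mul]
    apply intervalIntegral.integral_congr
    intro τ hτ
    rw [uIcc_of_le hs0.le] at hτ
    show (s - τ) ^ (-α) / Real.Gamma (1 - α) * deriv (fun y => |F y| ^ p) τ
      = 1 / Real.Gamma (1 - α) * ((s - τ) ^ (-α) * (p * (|F τ| ^ (p - 2) * F τ) * deriv F τ))
    rw [(hGd τ (hIccs hτ)).deriv]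
    ring
  have h0 : 0 ≤ (1 / Real.Gamma (1 - α)) * ∫ τ in (0:ℝ)..s, (s - τ) ^ (-α) * ψ' τ :=
    mul_nonneg (by positivity) hkey
  rw [hsub, mul_sub] at h0
  rw [hcF, hcG]
  nlinarith [h0]

/-! ### The Fubini step -/

noncomputable def gfun (α : ℝ) (a d : ℝ → ℝ) (s τ : ℝ) : ℝ :=
  (s - τ) ^ (-α) * (a s * d τ / Real.Gamma (1 - α))

noncomputable def kfun (α : ℝ) (a d : ℝ → ℝ) (s τ : ℝ) : ℝ :=
  if τ ≤ s then gfun α a d s τ else 0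

variable {α t : ℝ} {a d : ℝ → ℝ}

lemma kfun_eq_indicator (s : ℝ) :
    (fun τ => kfun α a d s τ) = Set.indicator (Iic s) (gfun α a d s) := by
  funext τ
  rw [Set.indicator_apply]
  simp [kfun, Set.mem_Iic]

lemma kfun_eq_indicator' (τ : ℝ) :
    (fun s => kfun α a d s τ) = Set.indicator (Ici τ) (fun s => gfun α a d s τ) := by
  funext s
  rw [Set.indicator_apply]
  simp [kfun, Set.mem_Ici]

lemma measurable_kfun (ha : Continuous a) (hd : Measurable d) :
    Measurable (Function.uncurry (kfun α a d)) := by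
  have h1 : Measurable (Function.uncurry (gfun α a d)) := by
    apply Measurable.mul
    · exact measurable_ker.comp (measurable_fst.sub measurable_snd)
    · exact (((ha.measurable.comp measurable_fst).mul
        (hd.comp measurable_snd)).div_const _)
  exact Measurable.ite (measurableSet_le measurable_snd measurable_fst) h1 measurable_const

lemma gfun_intervalIntegrable (hα0 : 0 < α) (hα1 : α < 1) (ht : 0 < t)
    (ha : Continuous a) (hdc : ContinuousOn d (Icc 0 t)) {s : ℝ} (hs : s ∈ Icc 0 t) :
    IntervalIntegrable (gfun α a d s) volume 0 s := by
  show IntervalIntegrable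
    (fun τ => (s - τ) ^ (-α) * (a s * d τ / Real.Gamma (1 - α))) volume 0 s
  apply ker_mul_intervalIntegrable hα0 hα1 hs.1
  exact (continuousOn_const.mul (hdc.mono (Icc_subset_Icc le_rfl hs.2))).div_const _

lemma Iic_inter {s : ℝ} (hs : s ∈ Icc (0:ℝ) t) : Iic s ∩ Ioc 0 t = Ioc 0 s := by
  ext x
  simp only [mem_inter_iff, mem_Iic, mem_Ioc]
  exact ⟨fun ⟨h1, h2, _⟩ => ⟨h2, h1⟩, fun ⟨h1, h2⟩ => ⟨h2, h1, h2.trans hs.2⟩⟩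

lemma Ici_inter {τ : ℝ} (hτ : τ ∈ Ioc (0:ℝ) t) : Ici τ ∩ Ioc 0 t = Icc τ t := by
  ext x
  simp only [mem_inter_iff, mem_Ici, mem_Ioc, mem_Icc]
  exact ⟨fun ⟨h1, _, h3⟩ => ⟨h1, h3⟩, fun ⟨h1, h2⟩ => ⟨h1, hτ.1.trans_le h1, h2⟩⟩

lemma kfun_slice_integrable (hα0 : 0 < α) (hα1 : α < 1) (ht : 0 < t)
    (ha : Continuous a) (hdc : ContinuousOn d (Icc 0 t)) {s : ℝ} (hs : s ∈ Icc 0 t) :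
    Integrable (fun τ => kfun α a d s τ) (volume.restrict (Ioc 0 t)) := by
  rw [kfun_eq_indicator]
  rw [integrable_indicator_iff measurableSet_Iic]
  rw [IntegrableOn, Measure.restrict_restrict measurableSet_Iic, Iic_inter hs]
  exact (gfun_intervalIntegrable hα0 hα1 ht ha hdc hs).1

lemma kfun_slice_eq (hα0 : 0 < α) (hα1 : α < 1) (ht : 0 < t)
    {s : ℝ} (hs : s ∈ Icc 0 t) :
    ∫ τ in Ioc 0 t, kfun α a d s τ = ∫ τ in (0:ℝ)..s, gfun α a d s τ := by
  rw [kfun_eq_indicator, MeasureTheory.integral_indicator measurableSet_Iic,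
    Measure.restrict_restrict measurableSet_Iic, Iic_inter hs,
    intervalIntegral.integral_of_le hs.1]

lemma kfun_prod_integrable (hα0 : 0 < α) (hα1 : α < 1) (ht : 0 < t)
    (ha : Continuous a) (hd : Measurable d) (hdc : ContinuousOn d (Icc 0 t)) :
    Integrable (Function.uncurry (kfun α a d))
      ((volume.restrict (Ioc 0 t)).prod (volume.restrict (Ioc 0 t))) := by
  have h1α : (0:ℝ) < 1 - α := by linarith
  have hc : 0 < Real.Gamma (1 - α) := Real.Gamma_pos_of_pos (by linarith)
  have hAESM : AEStronglyMeasurable (Function.uncurry (kfun α a d))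
      ((volume.restrict (Ioc 0 t)).prod (volume.restrict (Ioc 0 t))) :=
    (measurable_kfun ha hd).aestronglyMeasurable
  rw [integrable_prod_iff hAESM]
  constructor
  · filter_upwards [ae_restrict_mem measurableSet_Ioc] with s hs
    exact kfun_slice_integrable hα0 hα1 ht ha hdc (Ioc_subset_Icc_self hs)
  · obtain ⟨Ma, hMa⟩ := (isCompact_Icc (a := (0:ℝ)) (b := t)).exists_bound_of_continuousOn
      ha.continuousOn
    obtain ⟨Md, hMd⟩ := (isCompact_Icc (a := (0:ℝ)) (b := t)).exists_bound_of_continuousOn hdc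
    set B : ℝ := (max Ma 0) * (max Md 0) / Real.Gamma (1 - α) with hB
    have hBnn : 0 ≤ B := by positivity
    set BB : ℝ := B * (t ^ (1 - α) / (1 - α)) with hBB
    have hbound : ∀ s ∈ Ioc (0:ℝ) t, (∫ τ in Ioc 0 t, ‖kfun α a d s τ‖) ≤ BB := by
      intro s hs
      have hsIcc : s ∈ Icc (0:ℝ) t := Ioc_subset_Icc_self hs
      have heq : (∫ τ in Ioc 0 t, ‖kfun α a d s τ‖)
          = ∫ τ in Ioc 0 s, ‖gfun α a d s τ‖ := by
        have : (fun τ => ‖kfun α a d s τ‖)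
            = Set.indicator (Iic s) (fun τ => ‖gfun α a d s τ‖) := by
          funext τ
          rw [Set.indicator_apply]
          simp only [kfun, Set.mem_Iic]
          split <;> simp
        rw [this, MeasureTheory.integral_indicator measurableSet_Iic,
          Measure.restrict_restrict measurableSet_Iic, Iic_inter hsIcc]
      rw [heq]
      have hmono : ∫ τ in Ioc 0 s, ‖gfun α a d s τ‖
          ≤ ∫ τ in Ioc 0 s, (s - τ) ^ (-α) * B := by
        apply setIntegral_mono_on
        · exact (gfun_intervalIntegrable hα0 hα1 ht ha hdc hsIcc).1.norm
        · exact (ker_mul_intervalIntegrable hα0 hα1 hsIcc.1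
            (continuousOn_const (c := B))).1
        · exact measurableSet_Ioc
        · intro τ hτ
          have hτIcc : τ ∈ Icc (0:ℝ) t := ⟨hτ.1.le, hτ.2.trans hsIcc.2⟩
          have hknn : (0:ℝ) ≤ (s - τ) ^ (-α) := Real.rpow_nonneg (by linarith [hτ.2]) _
          have : ‖gfun α a d s τ‖ = (s - τ) ^ (-α) * |a s * d τ / Real.Gamma (1 - α)| := by
            rw [gfun, Real.norm_eq_abs, abs_mul, abs_of_nonneg hknn]
          rw [this]
          apply mul_le_mul_of_nonneg_left ?_ hknn
          rw [abs_div, abs_mul, abs_of_pos hc]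
          have ha1 : |a s| ≤ max Ma 0 := le_trans (by simpa using hMa s hsIcc) (le_max_left _ _)
          have hd1 : |d τ| ≤ max Md 0 := le_trans (by simpa using hMd τ hτIcc) (le_max_left _ _)
          show |a s| * |d τ| / Real.Gamma (1 - α) ≤ (max Ma 0) * (max Md 0) / Real.Gamma (1 - α)
          gcongr
      have hval : ∫ τ in Ioc 0 s, (s - τ) ^ (-α) * B = s ^ (1 - α) / (1 - α) * B := by
        rw [← intervalIntegral.integral_of_le hsIcc.1, intervalIntegral.integral_mul_const,
          ker_integral hα1, sub_zero]
      have hle : s ^ (1 - α) / (1 - α) * B ≤ BB := by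
        rw [hBB]
        have : s ^ (1 - α) ≤ t ^ (1 - α) :=
          Real.rpow_le_rpow hsIcc.1 hsIcc.2 h1α.le
        calc s ^ (1 - α) / (1 - α) * B ≤ t ^ (1 - α) / (1 - α) * B := by
              apply mul_le_mul_of_nonneg_right ?_ hBnn
              gcongr
          _ = B * (t ^ (1 - α) / (1 - α)) := by ring
      linarith [hmono, hval.le, hle]
    apply Integrable.mono' (g := fun _ => BB)
      ((integrableOn_const_iff (C := BB)).mpr (Or.inr measure_Ioc_lt_top))
    · exact hAESM.norm.integral_prod_right'
    · filter_upwards [ae_restrict_mem measurableSet_Ioc] with s hs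
      rw [Real.norm_eq_abs, abs_of_nonneg (integral_nonneg (fun τ => norm_nonneg _))]
      exact hbound s hs

lemma kfun_marginal_integrable (hα0 : 0 < α) (hα1 : α < 1) (ht : 0 < t)
    (ha : Continuous a) (hd : Measurable d) (hdc : ContinuousOn d (Icc 0 t)) :
    IntegrableOn (fun s => ∫ τ in (0:ℝ)..s, gfun α a d s τ) (Ioc 0 t) := by
  have h := (kfun_prod_integrable hα0 hα1 ht ha hd hdc).integral_prod_left
  apply h.congr
  filter_upwards [ae_restrict_mem measurableSet_Ioc] with s hs
  exact kfun_slice_eq hα0 hα1 ht (Ioc_subset_Icc_self hs)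

lemma kfun_swap (hα0 : 0 < α) (hα1 : α < 1) (ht : 0 < t)
    (ha : Continuous a) (hd : Measurable d) (hdc : ContinuousOn d (Icc 0 t)) :
    ∫ s in Ioc 0 t, (∫ τ in (0:ℝ)..s, gfun α a d s τ)
      = ∫ τ in Ioc 0 t, (∫ s in τ..t, gfun α a d s τ) := by
  have hswap := integral_integral_swap (f := kfun α a d)
    (kfun_prod_integrable hα0 hα1 ht ha hd hdc)
  have h1 : ∫ s in Ioc 0 t, (∫ τ in (0:ℝ)..s, gfun α a d s τ)
      = ∫ s in Ioc 0 t, (∫ τ in Ioc 0 t, kfun α a d s τ) := by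
    apply setIntegral_congr_fun measurableSet_Ioc
    intro s hs
    exact (kfun_slice_eq hα0 hα1 ht (Ioc_subset_Icc_self hs)).symm
  have h2 : ∫ τ in Ioc 0 t, (∫ s in Ioc 0 t, kfun α a d s τ)
      = ∫ τ in Ioc 0 t, (∫ s in τ..t, gfun α a d s τ) := by
    apply setIntegral_congr_fun measurableSet_Ioc
    intro τ hτ
    show (∫ s in Ioc 0 t, kfun α a d s τ) = ∫ s in τ..t, gfun α a d s τ
    rw [kfun_eq_indicator', MeasureTheory.integral_indicator measurableSet_Ici,
      Measure.restrict_restrict measurableSet_Ici, Ici_inter hτ,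
      integral_Icc_eq_integral_Ioc, ← intervalIntegral.integral_of_le hτ.2]
  rw [h1, hswap, h2]

/-! ### The fundamental theorem of calculus step -/

lemma rl_eq (hα0 : 0 < α) (hα1 : α < 1) {t : ℝ} (ht : 0 < t) {G dG : ℝ → ℝ}
    (hGc : ContinuousOn G (Icc 0 t))
    (hGd : ∀ u ∈ Ioo (0:ℝ) t, HasDerivAt G (dG u) u) (hdGc : ContinuousOn dG (Icc 0 t))
    (hG0 : G 0 = 0) :
    ∫ τ in (0:ℝ)..t, (t - τ) ^ (1 - α) / ((1 - α) * Real.Gamma (1 - α)) * dG τ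
      = ∫ τ in (0:ℝ)..t, (t - τ) ^ (-α) / Real.Gamma (1 - α) * G τ := by
  have h1α : (0:ℝ) < 1 - α := by linarith
  have hc : 0 < Real.Gamma (1 - α) := Real.Gamma_pos_of_pos (by linarith)
  set c := Real.Gamma (1 - α) with hcdef
  set Φ : ℝ → ℝ := fun τ => (t - τ) ^ (1 - α) / ((1 - α) * c) * G τ with hΦdef
  set Φ' : ℝ → ℝ := fun τ => (t - τ) ^ (1 - α) / ((1 - α) * c) * dG τ
    - (t - τ) ^ (-α) / c * G τ with hΦ'def
  have hkcont : ContinuousOn (fun τ : ℝ => (t - τ) ^ (1 - α)) (Icc 0 t) := by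
    intro τ hτ
    exact ((Real.continuousAt_rpow_const (t - τ) (1 - α) (Or.inr h1α.le)).comp
      ((continuous_const.sub continuous_id).continuousAt)).continuousWithinAt
  have hΦc : ContinuousOn Φ (Icc 0 t) := (hkcont.div_const _).mul hGc
  have hΦd : ∀ τ ∈ Ioo (0:ℝ) t, HasDerivAt Φ (Φ' τ) τ := by
    intro τ hτ
    have hne : t - τ ≠ 0 := by intro hcon; linarith [hτ.2]
    have hk : HasDerivAt (fun τ : ℝ => (t - τ) ^ (1 - α)) (-((1 - α) * (t - τ) ^ (-α))) τ := by
      have hbase := Real.hasDerivAt_rpow_const (x := t - τ) (p := 1 - α) (Or.inl hne)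
      have hlin : HasDerivAt (fun τ : ℝ => t - τ) (-1) τ := (hasDerivAt_id τ).const_sub t
      have := hbase.comp τ hlin
      exact this.congr_deriv (by rw [show (1:ℝ) - α - 1 = -α by ring]; ring)
    have := (hk.div_const ((1 - α) * c)).mul (hGd τ hτ)
    refine this.congr_deriv ?_
    simp only [hΦ'def]
    field_simp
    ring
  have hint2 : IntervalIntegrable (fun τ => (t - τ) ^ (-α) / c * G τ) volume 0 t := by
    have : (fun τ => (t - τ) ^ (-α) / c * G τ) = fun τ => (t - τ) ^ (-α) * (G τ / c) := by
      funext τ; ring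
    rw [this]
    exact ker_mul_intervalIntegrable hα0 hα1 ht.le (hGc.div_const _)
  have hint1 : IntervalIntegrable
      (fun τ => (t - τ) ^ (1 - α) / ((1 - α) * c) * dG τ) volume 0 t :=
    ((hkcont.div_const _).mul hdGc).intervalIntegrable_of_Icc ht.le
  have hftc : ∫ τ in (0:ℝ)..t, Φ' τ = Φ t - Φ 0 :=
    integral_eq_sub_of_hasDeriv_right_of_le ht.le hΦc
      (fun x hx => (hΦd x hx).hasDerivWithinAt) (hint1.sub hint2)
  have hΦt : Φ t = 0 := by
    simp only [hΦdef, sub_self, Real.zero_rpow h1α.ne', zero_div, zero_mul]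
  have hΦ0 : Φ 0 = 0 := by
    simp only [hΦdef, hG0, mul_zero]
  have hsub : ∫ τ in (0:ℝ)..t, Φ' τ
      = (∫ τ in (0:ℝ)..t, (t - τ) ^ (1 - α) / ((1 - α) * c) * dG τ)
        - ∫ τ in (0:ℝ)..t, (t - τ) ^ (-α) / c * G τ :=
    intervalIntegral.integral_sub hint1 hint2
  rw [hftc, hΦt, hΦ0] at hsub
  linarith [hsub]

end CapAux

open Set CapAux

theorem caputo_integrated_ineq (α p T : ℝ) (hα0 : 0 < α) (hα1 : α < 1) (hp : 1 < p)
    (hT : 0 < T) (F : ℝ → ℝ) (hdiff : ∀ s ∈ Set.Icc (0:ℝ) T, DifferentiableAt ℝ F s)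
    (hcont : ContinuousOn (deriv F) (Set.Icc 0 T)) (hF0 : F 0 = 0) :
    ∀ t ∈ Set.Ioc (0:ℝ) T,
      0 ≤ RL (1 - α) (fun s => |F s| ^ p) t ∧
      RL (1 - α) (fun s => |F s| ^ p) t ≤
        p * ∫ s in (0:ℝ)..t, (if F s = 0 then 0 else |F s| ^ (p - 2) * F s) * caputo α F s ∧
      0 ≤ ∫ s in (0:ℝ)..t, (if F s = 0 then 0 else |F s| ^ (p - 2) * F s) * caputo α F s := by
  intro t ht
  obtain ⟨ht0, htT⟩ := ht
  have h1α : (0:ℝ) < 1 - α := by linarith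
  have hc : 0 < Real.Gamma (1 - α) := Real.Gamma_pos_of_pos (by linarith)
  have hp0 : (0:ℝ) < p := by linarith
  -- Part 1 : RL is nonnegative
  have part1 : 0 ≤ RL (1 - α) (fun s => |F s| ^ p) t := by
    rw [RL]
    apply intervalIntegral.integral_nonneg ht0.le
    intro u hu
    have hk : (0:ℝ) ≤ (t - u) ^ ((1:ℝ) - α - 1) := Real.rpow_nonneg (by linarith [hu.2]) _
    have habs : (0:ℝ) ≤ |F u| ^ p := Real.rpow_nonneg (abs_nonneg _) _
    exact mul_nonneg (div_nonneg hk hc.le) habs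
  -- setup
  set G : ℝ → ℝ := fun y => |F y| ^ p with hGdef
  have hIccT : Icc (0:ℝ) t ⊆ Icc 0 T := Icc_subset_Icc le_rfl htT
  have hFc : ContinuousOn F (Icc 0 T) := fun u hu =>
    (hdiff u hu).continuousAt.continuousWithinAt
  have hGd : ∀ u ∈ Icc (0:ℝ) T,
      HasDerivAt G (p * (|F u| ^ (p - 2) * F u) * deriv F u) u := by
    intro u hu
    have := (eta_deriv hp (F u)).comp u (hdiff u hu).hasDerivAt
    simpa [hGdef, Function.comp_def, mul_assoc] using this
  have hdG : ∀ u ∈ Icc (0:ℝ) T, deriv G u = p * (|F u| ^ (p - 2) * F u) * deriv F u :=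
    fun u hu => (hGd u hu).deriv
  have hdGmeas : Measurable (deriv G) := measurable_deriv _
  have hdGc : ContinuousOn (deriv G) (Icc 0 t) := by
    have hg : ContinuousOn (fun u => p * (|F u| ^ (p - 2) * F u) * deriv F u) (Icc 0 t) :=
      (continuousOn_const.mul
        ((eta1_cont hp).comp_continuousOn (hFc.mono hIccT))).mul (hcont.mono hIccT)
    exact hg.congr (fun u hu => hdG u (hIccT hu))
  have hdFmeas : Measurable (deriv F) := measurable_deriv _
  have hdFc : ContinuousOn (deriv F) (Icc 0 t) := hcont.mono hIccT
  have hGc : ContinuousOn G (Icc 0 t) := by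
    apply Continuous.comp_continuousOn (g := fun x : ℝ => |x| ^ p)
    · have := contDiff_norm_rpow (E := ℝ) hp
      have hcont' := this.continuous
      simpa [Real.norm_eq_abs] using hcont'
    · exact hFc.mono hIccT
  have hG0 : G 0 = 0 := by
    simp [hGdef, hF0, Real.zero_rpow (by positivity : p ≠ 0)]
  -- the clamped weight function
  set clamp : ℝ → ℝ := fun s => min (max s 0) T with hclampdef
  have hclampc : Continuous clamp := (continuous_id.max continuous_const).min continuous_const
  have hclampmem : ∀ s, clamp s ∈ Icc (0:ℝ) T := fun s =>
    ⟨le_min (le_max_right _ _) hT.le, min_le_right _ _⟩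
  have hclampeq : ∀ s ∈ Icc (0:ℝ) t, clamp s = s := by
    intro s hs
    simp only [hclampdef]
    rw [max_eq_left hs.1, min_eq_left (hs.2.trans htT)]
  set a : ℝ → ℝ := fun s => p * (|F (clamp s)| ^ (p - 2) * F (clamp s)) with hadef
  have hac : Continuous a := by
    apply continuous_const.mul
    exact (eta1_cont hp).comp (hFc.comp_continuous hclampc hclampmem)
  have haeq : ∀ s ∈ Icc (0:ℝ) t, a s = p * (|F s| ^ (p - 2) * F s) := by
    intro s hs
    simp only [hadef, hclampeq s hs]
  set one : ℝ → ℝ := fun _ => (1:ℝ) with honedef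
  have honec : Continuous one := continuous_const
  -- identification of the marginals with caputo integrals
  have hcapG : ∀ s : ℝ, (∫ τ in (0:ℝ)..s, gfun α one (deriv G) s τ) = caputo α G s := by
    intro s
    rw [caputo]
    apply intervalIntegral.integral_congr
    intro τ _
    simp only [gfun, honedef]
    ring
  have hcapF : ∀ s ∈ Icc (0:ℝ) t,
      (∫ τ in (0:ℝ)..s, gfun α a (deriv F) s τ)
        = p * (|F s| ^ (p - 2) * F s) * caputo α F s := by
    intro s hs
    have h1 : (fun τ => gfun α a (deriv F) s τ)
        = fun τ => a s * ((s - τ) ^ (-α) / Real.Gamma (1 - α) * deriv F τ) := by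
      funext τ
      simp only [gfun]
      ring
    rw [h1, intervalIntegral.integral_const_mul, haeq s hs, caputo]
  -- integrability of both marginals
  have hGint : IntegrableOn (fun s => caputo α G s) (Ioc 0 t) := by
    have h := kfun_marginal_integrable hα0 hα1 ht0 honec hdGmeas hdGc
    have he : (fun s => ∫ τ in (0:ℝ)..s, gfun α one (deriv G) s τ)
        = fun s => caputo α G s := funext hcapG
    rwa [he] at h
  have hgint : IntegrableOn
      (fun s => p * (|F s| ^ (p - 2) * F s) * caputo α F s) (Ioc 0 t) := by
    have h := kfun_marginal_integrable hα0 hα1 ht0 hac hdFmeas hdFc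
    apply h.congr
    filter_upwards [MeasureTheory.ae_restrict_mem measurableSet_Ioc] with s hs
    exact hcapF s (Ioc_subset_Icc_self hs)
  -- pointwise inequality and monotonicity of the set integral
  have hmono : ∫ s in Ioc 0 t, caputo α G s
      ≤ ∫ s in Ioc 0 t, p * (|F s| ^ (p - 2) * F s) * caputo α F s := by
    apply MeasureTheory.setIntegral_mono_on hGint hgint measurableSet_Ioc
    intro s hs
    exact caputo_ptwise hα0 hα1 hp hdiff hcont ⟨hs.1, hs.2.trans htT⟩
  -- identification of RL with the integral of caputo G
  have hswap := kfun_swap hα0 hα1 ht0 honec hdGmeas hdGc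
  have hinner : ∀ τ ∈ Ioc (0:ℝ) t,
      (∫ s in τ..t, gfun α one (deriv G) s τ)
        = (t - τ) ^ (1 - α) / ((1 - α) * Real.Gamma (1 - α)) * deriv G τ := by
    intro τ hτ
    have h1 : (fun s => gfun α one (deriv G) s τ)
        = fun s => (s - τ) ^ (-α) * (deriv G τ / Real.Gamma (1 - α)) := by
      funext s
      simp only [gfun, honedef]
      ring
    rw [h1, intervalIntegral.integral_mul_const, ker_integral' hα1]
    field_simp
  have hRL1 : RL (1 - α) G t
      = ∫ τ in (0:ℝ)..t, (t - τ) ^ (-α) / Real.Gamma (1 - α) * G τ := by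
    rw [RL]
    apply intervalIntegral.integral_congr
    intro τ _
    rw [show (1:ℝ) - α - 1 = -α by ring]
  have hGdIoo : ∀ u ∈ Ioo (0:ℝ) t, HasDerivAt G (deriv G u) u := by
    intro u hu
    have humem : u ∈ Icc (0:ℝ) T := hIccT (Ioo_subset_Icc_self hu)
    rw [hdG u humem]
    exact hGd u humem
  have hRL2 : RL (1 - α) G t
      = ∫ τ in (0:ℝ)..t,
          (t - τ) ^ (1 - α) / ((1 - α) * Real.Gamma (1 - α)) * deriv G τ := by
    rw [hRL1]
    exact (rl_eq hα0 hα1 ht0 hGc hGdIoo hdGc hG0).symm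
  have hRL3 : RL (1 - α) G t = ∫ s in Ioc 0 t, caputo α G s := by
    rw [hRL2, intervalIntegral.integral_of_le ht0.le]
    have e1 : ∫ s in Ioc 0 t, caputo α G s
        = ∫ s in Ioc 0 t, (∫ τ in (0:ℝ)..s, gfun α one (deriv G) s τ) := by
      rw [funext hcapG]
    rw [e1, hswap]
    apply MeasureTheory.setIntegral_congr_fun measurableSet_Ioc
    intro τ hτ
    exact (hinner τ hτ).symm
  -- rewriting the right-hand side
  have hfinal : ∫ s in Ioc 0 t, p * (|F s| ^ (p - 2) * F s) * caputo α F s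
      = p * ∫ s in (0:ℝ)..t,
          (if F s = 0 then 0 else |F s| ^ (p - 2) * F s) * caputo α F s := by
    rw [intervalIntegral.integral_of_le ht0.le, ← MeasureTheory.integral_const_mul]
    apply MeasureTheory.setIntegral_congr_fun measurableSet_Ioc
    intro s _
    show p * (|F s| ^ (p - 2) * F s) * caputo α F s
      = p * ((if F s = 0 then 0 else |F s| ^ (p - 2) * F s) * caputo α F s)
    by_cases h : F s = 0
    · simp [h]
    · rw [if_neg h]
      ring
  have part2 : RL (1 - α) (fun s => |F s| ^ p) t ≤
      p * ∫ s in (0:ℝ)..t,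
        (if F s = 0 then 0 else |F s| ^ (p - 2) * F s) * caputo α F s := by
    calc RL (1 - α) (fun s => |F s| ^ p) t = ∫ s in Ioc 0 t, caputo α G s := hRL3
      _ ≤ ∫ s in Ioc 0 t, p * (|F s| ^ (p - 2) * F s) * caputo α F s := hmono
      _ = p * ∫ s in (0:ℝ)..t,
          (if F s = 0 then 0 else |F s| ^ (p - 2) * F s) * caputo α F s := hfinal
  refine ⟨part1, part2, ?_⟩
  have h3 : 0 ≤ p * ∫ s in (0:ℝ)..t,
      (if F s = 0 then 0 else |F s| ^ (p - 2) * F s) * caputo α F s :=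
    part1.trans part2
  nlinarith [h3, hp0]
end
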